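/- Let (ι, A, I, z, x) be a GI datum and (ι', A, I, z', x') a Kramers–Wannier dual datum for it. Then the complex dimensions of the symmetric sector L₀ and of the dual symmetric sector L₀' are equal. -/

import Mathlib

noncomputable section

/-- The `ZMod 2`-valued dot product `u·v = ∑ j, u j * v j`. -/
def dotp {ι : Type} [Fintype ι] (u v : ι → ZMod 2) : ZMod 2 := ∑ j, u j * v j

/-- The X-type Pauli operator `X_u`: the permutation matrix with
`(X_u)_{s,t} = 1` iff `s = t + u`. -/
def Xop {ι : Type} [Fintype ι] (u : ι → ZMod 2) :
    Matrix (ι → ZMod 2) (ι → ZMod 2) ℂ :=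
  Matrix.of fun s t => if s = t + u then 1 else 0

/-- The Z-type Pauli operator `Z_v`: the diagonal matrix with
`(Z_v)_{s,s} = (-1)^(v·s)`. -/
def Zop {ι : Type} [Fintype ι] (v : ι → ZMod 2) :
    Matrix (ι → ZMod 2) (ι → ZMod 2) ℂ :=
  Matrix.of fun s t => if s = t then (-1 : ℂ) ^ (dotp v s).val else 0

/-- The standard inner product on the `ι`-qubit Hilbert space `(ι → ZMod 2) → ℂ`. -/
def qInner {ι : Type} [Fintype ι] [DecidableEq ι] (ψ φ : (ι → ZMod 2) → ℂ) : ℂ :=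
  ∑ s, (starRingEnd ℂ) (ψ s) * φ s

/-- The subspace of vectors fixed by every operator in a given set of matrices. -/
def fixedSpace {ι : Type} [Fintype ι] [DecidableEq ι]
    (Ms : Set (Matrix (ι → ZMod 2) (ι → ZMod 2) ℂ)) :
    Submodule ℂ ((ι → ZMod 2) → ℂ) :=
  ⨅ M ∈ Ms, LinearMap.ker (Matrix.mulVecLin M - LinearMap.id)
/-- The symmetric sector `L₀` of a GI datum `(ι, A, I, z, x)`: vectors fixed by every
Z-type symmetry `Z_v` (`v·(x i) = 0` for all `i`) and every compatible X-type symmetry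
`X_u` (`u·(z α) = 0` for all `α`, and `u·v = 0` for every `v` with `v·(x i) = 0` for all `i`). -/
def giL0 (ι A I : Type) [Fintype ι] [DecidableEq ι] [Fintype A] [Fintype I]
    (z : A → ι → ZMod 2) (x : I → ι → ZMod 2) : Submodule ℂ ((ι → ZMod 2) → ℂ) :=
  fixedSpace
    ({M | ∃ v : ι → ZMod 2, (∀ i, dotp v (x i) = 0) ∧ M = Zop v} ∪
     {M | ∃ u : ι → ZMod 2, (∀ α, dotp u (z α) = 0) ∧
        (∀ v : ι → ZMod 2, (∀ i, dotp v (x i) = 0) → dotp u v = 0) ∧ M = Xop u})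

/-- The dual symmetric sector `L₀'` of a dual datum `(ι', A, I, z', x')`: vectors fixed
by every X-type symmetry `X_{u'}` (`u'·(z' α) = 0` for all `α`) and every compatible
Z-type symmetry `Z_{v'}` (`v'` in the span of the `z' α` and `v'·(x' i) = 0` for all `i`). -/
def dualL0 (ι' A I : Type) [Fintype ι'] [DecidableEq ι'] [Fintype A] [Fintype I]
    (z' : A → ι' → ZMod 2) (x' : I → ι' → ZMod 2) : Submodule ℂ ((ι' → ZMod 2) → ℂ) :=
  fixedSpace
    ({M | ∃ u' : ι' → ZMod 2, (∀ α, dotp u' (z' α) = 0) ∧ M = Xop u'} ∪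
     {M | ∃ v' : ι' → ZMod 2, v' ∈ Submodule.span (ZMod 2) (Set.range z') ∧
        (∀ i, dotp v' (x' i) = 0) ∧ M = Zop v'})
section KWaux

open Module Submodule

variable {κ : Type} [Fintype κ] [DecidableEq κ]

lemma zmod2_cases : ∀ a : ZMod 2, a = 0 ∨ a = 1 := by decide

lemma zmod2_add_self : ∀ a : ZMod 2, a + a = 0 := by decide

lemma fun_add_self (w : κ → ZMod 2) : w + w = 0 := by
  funext j; exact zmod2_add_self (w j)

/-- `dotp` as a bilinear form. -/
def dotB (κ : Type) [Fintype κ] : LinearMap.BilinForm (ZMod 2) (κ → ZMod 2) :=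
  LinearMap.mk₂ (ZMod 2) (fun u v => dotp u v)
    (fun u u' v => by simp [dotp, add_mul, Finset.sum_add_distrib])
    (fun c u v => by simp [dotp, Finset.mul_sum, mul_assoc])
    (fun u v v' => by simp [dotp, mul_add, Finset.sum_add_distrib])
    (fun c u v => by simp [dotp, Finset.mul_sum, mul_left_comm])

@[simp] lemma dotB_apply (u v : κ → ZMod 2) : dotB κ u v = dotp u v := rfl

lemma dotp_comm (u v : κ → ZMod 2) : dotp u v = dotp v u := by
  simp [dotp, mul_comm]

lemma dotB_refl : (dotB κ).IsRefl := fun u v h => by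
  rwa [dotB_apply, dotp_comm, ← dotB_apply]

lemma dotB_nondeg : (dotB κ).Nondegenerate := by
  refine (LinearMap.IsRefl.nondegenerate_iff_separatingLeft dotB_refl).mpr ?_
  intro v h
  funext j
  have := h (Pi.single j 1)
  simpa [dotp, Pi.single_apply, mul_ite, Finset.sum_ite_eq'] using this

lemma forall_span_dotp {η : Type} (f : η → (κ → ZMod 2)) (v : κ → ZMod 2)
    (h : ∀ i, dotp (f i) v = 0) :
    ∀ w ∈ Submodule.span (ZMod 2) (Set.range f), dotp w v = 0 := by
  intro w hw
  have hle : Submodule.span (ZMod 2) (Set.range f) ≤ LinearMap.ker ((dotB κ).flip v) := by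
    rw [Submodule.span_le]
    rintro _ ⟨i, rfl⟩
    exact h i
  exact hle hw

lemma mem_orth_span {η : Type} (f : η → (κ → ZMod 2)) (v : κ → ZMod 2) :
    v ∈ (dotB κ).orthogonal (Submodule.span (ZMod 2) (Set.range f)) ↔
      ∀ i, dotp (f i) v = 0 := by
  constructor
  · intro h i
    exact h (f i) (Submodule.subset_span (Set.mem_range_self i))
  · intro h w hw
    exact forall_span_dotp f v h w hw

lemma dotp_lincomb {A : Type} [Fintype A] (c : A → ZMod 2) (g : A → (κ → ZMod 2))
    (s : κ → ZMod 2) :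
    dotp (∑ α, c α • g α) s = dotp c (fun α => dotp (g α) s) := by
  have h1 : dotp (∑ α, c α • g α) s = ((dotB κ).flip s) (∑ α, c α • g α) := rfl
  rw [h1, map_sum]
  simp only [map_smul, LinearMap.flip_apply, dotB_apply, smul_eq_mul]
  rfl

lemma mem_span_of_dotp {η : Type} (f : η → (κ → ZMod 2)) (s : κ → ZMod 2)
    (hs : ∀ v, (∀ i, dotp v (f i) = 0) → dotp v s = 0) :
    s ∈ Submodule.span (ZMod 2) (Set.range f) := by
  have hX := LinearMap.BilinForm.orthogonal_orthogonal (dotB_nondeg) (dotB_refl)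
      (Submodule.span (ZMod 2) (Set.range f))
  rw [← hX]
  intro v hv
  have hvf : ∀ i, dotp v (f i) = 0 := fun i => by
    have h3 : dotp (f i) v = 0 := hv (f i) (Submodule.subset_span (Set.mem_range_self i))
    rw [dotp_comm]
    exact h3
  exact hs v hvf

/-- The space of `ℂ`-valued functions supported on `P` and invariant under translation by `Q`. -/
def spc (P Q : Submodule (ZMod 2) (κ → ZMod 2)) :
    Submodule ℂ ((κ → ZMod 2) → ℂ) where
  carrier := {ψ | (∀ s, s ∉ P → ψ s = 0) ∧ ∀ u ∈ Q, ∀ s, ψ (s + u) = ψ s}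
  add_mem' := fun ha hb =>
    ⟨fun s hs => by simp [ha.1 s hs, hb.1 s hs],
     fun u hu s => by simp [ha.2 u hu s, hb.2 u hu s]⟩
  zero_mem' := ⟨fun s _ => rfl, fun u _ s => rfl⟩
  smul_mem' := fun c ψ h =>
    ⟨fun s hs => by simp [h.1 s hs], fun u hu s => by simp [h.2 u hu s]⟩

lemma mem_spc (P Q : Submodule (ZMod 2) (κ → ZMod 2)) (ψ : (κ → ZMod 2) → ℂ) :
    ψ ∈ spc P Q ↔ (∀ s, s ∉ P → ψ s = 0) ∧ ∀ u ∈ Q, ∀ s, ψ (s + u) = ψ s :=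
  Iff.rfl

lemma finrank_spc {A : Type} [Fintype A]
    (π : (κ → ZMod 2) →ₗ[ZMod 2] (A → ZMod 2))
    (P Q : Submodule (ZMod 2) (κ → ZMod 2)) (hQ : Q = LinearMap.ker π ⊓ P) :
    Module.finrank ℂ (spc P Q) = Nat.card (P.map π) := by
  classical
  have hsec : ∀ t : P.map π, ∃ s, s ∈ P ∧ π s = (t : A → ZMod 2) := by
    rintro ⟨t, ht⟩
    rcases Submodule.mem_map.mp ht with ⟨s, hs, he⟩
    exact ⟨s, hs, he⟩
  choose sec secP secπ using hsec
  let F : ↥(spc P Q) →ₗ[ℂ] (↥(P.map π) → ℂ) :=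
    { toFun := fun ψ t => (ψ : (κ → ZMod 2) → ℂ) (sec t)
      map_add' := fun a b => funext fun t => rfl
      map_smul' := fun c a => funext fun t => rfl }
  let g : (↥(P.map π) → ℂ) → ((κ → ZMod 2) → ℂ) :=
    fun f s => if h : s ∈ P then f ⟨π s, Submodule.mem_map_of_mem h⟩ else 0
  have hgpos : ∀ f s (h : s ∈ P), g f s = f ⟨π s, Submodule.mem_map_of_mem h⟩ :=
    fun f s h => dif_pos h
  have hgneg : ∀ f s, s ∉ P → g f s = 0 := fun f s h => dif_neg h
  have hg : ∀ f, g f ∈ spc P Q := by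
    intro f
    refine ⟨fun s hs => hgneg f s hs, ?_⟩
    intro u hu s
    rw [hQ] at hu
    obtain ⟨huk, huP⟩ := hu
    by_cases h : s ∈ P
    · have h' : s + u ∈ P := P.add_mem h huP
      rw [hgpos f _ h', hgpos f s h]
      congr 1
      refine Subtype.ext ?_
      show π (s + u) = π s
      rw [map_add, LinearMap.mem_ker.mp huk, add_zero]
    · have h' : s + u ∉ P := by
        intro hc
        apply h
        have := P.add_mem hc huP
        rwa [add_assoc, fun_add_self, add_zero] at this
      rw [hgneg f _ h', hgneg f s h]
  let G : (↥(P.map π) → ℂ) →ₗ[ℂ] ↥(spc P Q) :=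
    { toFun := fun f => ⟨g f, hg f⟩
      map_add' := fun a b => by
        refine Subtype.ext (funext fun s => ?_)
        show g (a + b) s = g a s + g b s
        by_cases h : s ∈ P
        · rw [hgpos (a + b) s h, hgpos a s h, hgpos b s h]; rfl
        · rw [hgneg (a + b) s h, hgneg a s h, hgneg b s h]; simp
      map_smul' := fun c a => by
        refine Subtype.ext (funext fun s => ?_)
        show g (c • a) s = c • g a s
        by_cases h : s ∈ P
        · rw [hgpos (c • a) s h, hgpos a s h]; rfl
        · rw [hgneg (c • a) s h, hgneg a s h]; simp }
  have h₁ : F ∘ₗ G = LinearMap.id := by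
    refine LinearMap.ext fun f => funext fun t => ?_
    show g f (sec t) = f t
    rw [hgpos f _ (secP t)]
    congr 1
    exact Subtype.ext (secπ t)
  have h₂ : G ∘ₗ F = LinearMap.id := by
    refine LinearMap.ext fun ψ => Subtype.ext (funext fun s => ?_)
    show g (fun t => (ψ : (κ → ZMod 2) → ℂ) (sec t)) s = (ψ : (κ → ZMod 2) → ℂ) s
    by_cases h : s ∈ P
    · refine Eq.trans (hgpos (fun t => (ψ : (κ → ZMod 2) → ℂ) (sec t)) s h) ?_
      set t : ↥(P.map π) := ⟨π s, Submodule.mem_map_of_mem h⟩ with ht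
      have hπ : π (sec t) = π s := secπ t
      have hker : s + sec t ∈ Q := by
        rw [hQ]
        constructor
        · show π (s + sec t) = 0
          rw [map_add, hπ, fun_add_self]
        · exact P.add_mem h (secP t)
      have htr := ψ.2.2 (s + sec t) hker (sec t)
      have harr : sec t + (s + sec t) = s := by
        have he : sec t + (s + sec t) = s + (sec t + sec t) := by ring
        rw [he, fun_add_self, add_zero]
      rw [harr] at htr
      exact htr.symm
    · exact (hgneg (fun t => (ψ : (κ → ZMod 2) → ℂ) (sec t)) s h).trans (ψ.2.1 s h).symm
  let E : ↥(spc P Q) ≃ₗ[ℂ] (↥(P.map π) → ℂ) := LinearEquiv.ofLinear F G h₁ h₂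
  haveI : Fintype ↥(P.map π) := Fintype.ofFinite _
  rw [E.finrank_eq, Module.finrank_pi, Nat.card_eq_fintype_card]

lemma mem_fixedSpace (Ms : Set (Matrix (κ → ZMod 2) (κ → ZMod 2) ℂ))
    (ψ : (κ → ZMod 2) → ℂ) :
    ψ ∈ fixedSpace Ms ↔ ∀ M ∈ Ms, M.mulVec ψ = ψ := by
  simp [fixedSpace, Submodule.mem_iInf, LinearMap.mem_ker, LinearMap.sub_apply,
    sub_eq_zero, Matrix.mulVecLin_apply]

lemma Zop_fix (v : κ → ZMod 2) (ψ : (κ → ZMod 2) → ℂ) :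
    (Zop v).mulVec ψ = ψ ↔ ∀ s, dotp v s ≠ 0 → ψ s = 0 := by
  have hmv : ∀ s, (Zop v).mulVec ψ s = (-1 : ℂ) ^ (dotp v s).val * ψ s := by
    intro s
    simp [Zop, Matrix.mulVec, dotProduct, ite_mul, Finset.sum_ite_eq]
  constructor
  · intro h s hs
    have h1 : dotp v s = 1 := (zmod2_cases (dotp v s)).resolve_left hs
    have h5 := congrFun h s
    rw [hmv s, h1, show ((1 : ZMod 2).val) = 1 from rfl, pow_one] at h5
    linear_combination (-1/2 : ℂ) * h5
  · intro h
    funext s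
    rw [hmv s]
    rcases zmod2_cases (dotp v s) with h0 | h1
    · rw [h0, show ((0 : ZMod 2).val) = 0 from rfl, pow_zero, one_mul]
    · rw [h1, h s (by rw [h1]; exact one_ne_zero)]; ring
  
lemma Xop_fix (u : κ → ZMod 2) (ψ : (κ → ZMod 2) → ℂ) :
    (Xop u).mulVec ψ = ψ ↔ ∀ s, ψ (s + u) = ψ s := by
  have key : ∀ s, (Xop u).mulVec ψ s = ψ (s + u) := by
    intro s
    have hiff : ∀ t : κ → ZMod 2, (s = t + u) ↔ (t = s + u) := by
      intro t
      constructor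
      · rintro rfl; rw [add_assoc, fun_add_self, add_zero]
      · rintro rfl; rw [add_assoc, fun_add_self, add_zero]
    simp only [Xop, Matrix.mulVec, dotProduct, Matrix.of_apply]
    rw [Finset.sum_congr rfl (fun t _ => by rw [if_congr (hiff t) rfl rfl])]
    simp [ite_mul, Finset.sum_ite_eq']
  constructor
  · intro h s; rw [← key s]; exact congrFun h s
  · intro h; funext s; rw [key s, h s]

end KWaux

/-- for a GI datum and a Kramers–Wannier dual datum, the symmetric
sector and the dual symmetric sector have equal complex dimensions. -/
theorem statement11 (ι ι' A I : Type)
    [Fintype ι] [DecidableEq ι] [Fintype ι'] [DecidableEq ι'] [Fintype A] [Fintype I]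
    (z : A → ι → ZMod 2) (x : I → ι → ZMod 2)
    (z' : A → ι' → ZMod 2) (x' : I → ι' → ZMod 2)
    (hdual : ∀ (α : A) (i : I), dotp (z α) (x i) = dotp (z' α) (x' i)) :
    Module.finrank ℂ ↥(giL0 ι A I z x) = Module.finrank ℂ ↥(dualL0 ι' A I z' x') := by
  classical
  let π₁ : (ι → ZMod 2) →ₗ[ZMod 2] (A → ZMod 2) := LinearMap.pi (fun α => dotB ι (z α))
  let π₂ : (ι' → ZMod 2) →ₗ[ZMod 2] (A → ZMod 2) := LinearMap.pi (fun α => dotB ι' (z' α))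
  let X : Submodule (ZMod 2) (ι → ZMod 2) := Submodule.span (ZMod 2) (Set.range x)
  let Z' : Submodule (ZMod 2) (ι' → ZMod 2) := Submodule.span (ZMod 2) (Set.range z')
  let X' : Submodule (ZMod 2) (ι' → ZMod 2) := Submodule.span (ZMod 2) (Set.range x')
  let Q₁ : Submodule (ZMod 2) (ι → ZMod 2) := LinearMap.ker π₁ ⊓ X
  let W : Submodule (ZMod 2) (ι' → ZMod 2) := Z' ⊓ ((dotB ι').orthogonal X')
  let P₂ : Submodule (ZMod 2) (ι' → ZMod 2) := (dotB ι').orthogonal W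
  let Q₂ : Submodule (ZMod 2) (ι' → ZMod 2) := LinearMap.ker π₂
  have hker₁ : ∀ u : ι → ZMod 2, π₁ u = 0 ↔ ∀ α, dotp (z α) u = 0 := by
    intro u
    rw [funext_iff]
    exact forall_congr' fun α => Iff.rfl
  have hker₂ : ∀ u : ι' → ZMod 2, π₂ u = 0 ↔ ∀ α, dotp (z' α) u = 0 := by
    intro u
    rw [funext_iff]
    exact forall_congr' fun α => Iff.rfl
  -- Side 1: giL0 = spc X Q₁
  have hgi : giL0 ι A I z x = spc X Q₁ := by
    ext ψ
    rw [giL0, mem_fixedSpace, mem_spc]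
    constructor
    · intro h
      constructor
      · intro s hs
        by_contra hψ
        apply hs
        exact mem_span_of_dotp x s (fun v hv => by
          by_contra hvs
          exact hψ ((Zop_fix v ψ).mp (h (Zop v) (Or.inl ⟨v, hv, rfl⟩)) s hvs))
      · intro u hu s
        obtain ⟨huk, huX⟩ := hu
        have hz : ∀ α, dotp u (z α) = 0 := fun α => by
          rw [dotp_comm]
          exact (hker₁ u).mp (LinearMap.mem_ker.mp huk) α
        have hv : ∀ v, (∀ i, dotp v (x i) = 0) → dotp u v = 0 := fun v hvx =>
          forall_span_dotp x v (fun i => by rw [dotp_comm]; exact hvx i) u huX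
        exact (Xop_fix u ψ).mp (h (Xop u) (Or.inr ⟨u, hz, hv, rfl⟩)) s
    · rintro ⟨hsupp, htr⟩ M (⟨v, hvx, rfl⟩ | ⟨u, hz, hv, rfl⟩)
      · rw [Zop_fix]
        intro s hvs
        by_cases hsX : s ∈ X
        · refine absurd ?_ hvs
          have h6 := forall_span_dotp x v (fun i => by rw [dotp_comm]; exact hvx i) s hsX
          rwa [dotp_comm] at h6
        · exact hsupp s hsX
      · rw [Xop_fix]
        intro s
        refine htr u ⟨?_, ?_⟩ s
        · exact LinearMap.mem_ker.mpr
            ((hker₁ u).mpr (fun α => by rw [dotp_comm]; exact hz α))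
        · exact mem_span_of_dotp x u (fun v hvx => by rw [dotp_comm]; exact hv v hvx)
  -- Side 2: dualL0 = spc P₂ Q₂
  have hdu : dualL0 ι' A I z' x' = spc P₂ Q₂ := by
    ext ψ
    rw [dualL0, mem_fixedSpace, mem_spc]
    constructor
    · intro h
      constructor
      · intro s hs
        by_contra hψ
        apply hs
        intro v hvW
        obtain ⟨hvZ, hvX⟩ := hvW
        have hvx : ∀ i, dotp v (x' i) = 0 := fun i => by
          rw [dotp_comm]
          exact hvX (x' i) (Submodule.subset_span (Set.mem_range_self i))
        show dotp v s = 0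
        by_contra hvs
        exact hψ ((Zop_fix v ψ).mp (h (Zop v) (Or.inr ⟨v, hvZ, hvx, rfl⟩)) s hvs)
      · intro u hu s
        have hz : ∀ α, dotp u (z' α) = 0 := fun α => by
          rw [dotp_comm]
          exact (hker₂ u).mp (LinearMap.mem_ker.mp hu) α
        exact (Xop_fix u ψ).mp (h (Xop u) (Or.inl ⟨u, hz, rfl⟩)) s
    · rintro ⟨hsupp, htr⟩ M (⟨u, hz, rfl⟩ | ⟨v, hvZ, hvx, rfl⟩)
      · rw [Xop_fix]
        intro s
        refine htr u ?_ s
        exact LinearMap.mem_ker.mpr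
          ((hker₂ u).mpr (fun α => by rw [dotp_comm]; exact hz α))
      · rw [Zop_fix]
        intro s hvs
        by_cases hsP : s ∈ P₂
        · refine absurd ?_ hvs
          have hvW : v ∈ W :=
            ⟨hvZ, (mem_orth_span x' v).mpr (fun i => by rw [dotp_comm]; exact hvx i)⟩
          exact hsP v hvW
        · exact hsupp s hsP
  -- the common target space
  let T : Submodule (ZMod 2) (A → ZMod 2) :=
    Submodule.span (ZMod 2) (Set.range (fun i => fun α => dotp (z' α) (x' i)))
  have hT₁ : X.map π₁ = T := by
    show Submodule.map π₁ (Submodule.span (ZMod 2) (Set.range x)) =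
      Submodule.span (ZMod 2) (Set.range (fun i => fun α => dotp (z' α) (x' i)))
    rw [Submodule.map_span, ← Set.range_comp]
    have he : (⇑π₁ ∘ x) = (fun i => fun α => dotp (z' α) (x' i)) := by
      funext i
      funext α
      show dotp (z α) (x i) = dotp (z' α) (x' i)
      exact hdual α i
    rw [he]
  have hTrange : T ≤ LinearMap.range π₂ := by
    rw [Submodule.span_le]
    rintro _ ⟨i, rfl⟩
    exact LinearMap.mem_range.mpr ⟨x' i, rfl⟩
  have hP₂ : P₂ = T.comap π₂ := by
    ext s
    rw [Submodule.mem_comap]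
    constructor
    · intro hsP
      refine mem_span_of_dotp (fun i => fun α => dotp (z' α) (x' i)) (π₂ s) ?_
      intro c hc
      have hvZ : (∑ α, c α • z' α) ∈ Z' :=
        Submodule.sum_mem _ (fun α _ =>
          Submodule.smul_mem _ _ (Submodule.subset_span (Set.mem_range_self α)))
      have hvx : ∀ i, dotp (∑ α, c α • z' α) (x' i) = 0 := fun i => by
        have h4 : dotp (∑ α, c α • z' α) (x' i) =
            dotp c (fun α => dotp (z' α) (x' i)) := dotp_lincomb c z' (x' i)
        rw [h4]
        exact hc i
      have hvW : (∑ α, c α • z' α) ∈ W :=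
        ⟨hvZ, (mem_orth_span x' _).mpr (fun i => by rw [dotp_comm]; exact hvx i)⟩
      have hvs : dotp (∑ α, c α • z' α) s = 0 := hsP _ hvW
      have hlin : dotp (∑ α, c α • z' α) s = dotp c (π₂ s) := dotp_lincomb c z' s
      rw [← hlin]
      exact hvs
    · intro hsT v hvW
      obtain ⟨hvZ, hvX⟩ := hvW
      obtain ⟨c, hcv⟩ := (Submodule.mem_span_range_iff_exists_fun (ZMod 2)).mp hvZ
      show dotp v s = 0
      have hlin : dotp (∑ α, c α • z' α) s = dotp c (π₂ s) := dotp_lincomb c z' s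
      rw [← hcv, hlin]
      have hct : ∀ i, dotp (fun α => dotp (z' α) (x' i)) c = 0 := fun i => by
        rw [dotp_comm]
        have h4 : dotp (∑ α, c α • z' α) (x' i) =
            dotp c (fun α => dotp (z' α) (x' i)) := dotp_lincomb c z' (x' i)
        rw [← h4, hcv, dotp_comm]
        exact hvX (x' i) (Submodule.subset_span (Set.mem_range_self i))
      have h7 := forall_span_dotp (fun i => fun α => dotp (z' α) (x' i)) c hct (π₂ s) hsT
      rw [dotp_comm]
      exact h7
  have hT₂ : P₂.map π₂ = T := by
    rw [hP₂, Submodule.map_comap_eq, inf_eq_right.mpr hTrange]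
  have hQ₂ : Q₂ = LinearMap.ker π₂ ⊓ P₂ := by
    refine (inf_eq_left.mpr ?_).symm
    intro u hu
    intro v hvW
    exact forall_span_dotp z' u ((hker₂ u).mp (LinearMap.mem_ker.mp hu)) v hvW.1
  rw [hgi, hdu, finrank_spc π₁ X Q₁ rfl, finrank_spc π₂ P₂ Q₂ hQ₂, hT₁, hT₂]
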